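/- arXiv:1312.2848 — 2 statements merged into one kernel-verified Lean document; each statement's English description precedes it below -/
import Mathlib

section
/- Let A ∈ ℝ^{I×R}, B ∈ ℝ^{J×R}, d_1,…,d_m ∈ ℝ^R, and 2 ≤ m ≤ min(I,J,R). Then the polarized compound matrix satisfies D^{m−1}(A Diag(d_1) B^T, …, A Diag(d_m) B^T) = C_m(A) · Diag(PC_m([d_1 … d_m])) · C_m(B)^T, where [d_1 … d_m] is the R×m matrix with columns d_1,…,d_m and PC_m([d_1 … d_m]) is its m-th permanental compound matrix (a vector of length C(R,m)). -/
open scoped BigOperators Matrix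

noncomputable section

/-- The permanent of a square matrix over a commutative ring. -/
def permanent {α : Type*} [CommRing α] {n : ℕ} (A : Matrix (Fin n) (Fin n) α) : α :=
  ∑ σ : Equiv.Perm (Fin n), ∏ i, A i (σ i)

/-- The `m`-th compound matrix: the matrix of all `m × m` minors, with rows indexed by
`m`-element subsets of the rows and columns indexed by `m`-element subsets of the columns
(a subset of size `m` is enumerated in increasing order). -/
def compound {α : Type*} [CommRing α] {I J : ℕ} (m : ℕ) (A : Matrix (Fin I) (Fin J) α) :
    Matrix {s : Finset (Fin I) // s.card = m} {t : Finset (Fin J) // t.card = m} α :=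
  Matrix.of fun s t => Matrix.det (Matrix.of fun a b : Fin m =>
    A (s.1.orderIsoOfFin s.2 a : Fin I) (t.1.orderIsoOfFin t.2 b : Fin J))

/-- The polarized compound matrix `D^{m−1}(T_1,…,T_m)`: the `C(I,m) × C(J,m)` matrix
`∂^m C_m(x_1 T_1 + … + x_m T_m)/∂x_1 ⋯ ∂x_m` at `x = 0`, realized entrywise as the
coefficient of the monomial `x_1 ⋯ x_m` in the corresponding entry of the `m`-th compound
matrix of `x_1 T_1 + … + x_m T_m`; equivalently, its `(S,T)` entry is the mixed
discriminant of the submatrices `T_1(S,T),…,T_m(S,T)`. -/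
noncomputable def polarizedCompound {I J m : ℕ} (T : Fin m → Matrix (Fin I) (Fin J) ℝ) :
    Matrix {s : Finset (Fin I) // s.card = m} {t : Finset (Fin J) // t.card = m} ℝ :=
  Matrix.of fun s t =>
    MvPolynomial.coeff (∑ i : Fin m, Finsupp.single i 1)
      (compound m (Matrix.of fun a b =>
        ∑ i : Fin m, MvPolynomial.X i * MvPolynomial.C (T i a b)) s t)

section Aux
open Equiv Equiv.Perm Finset Function Matrix
open Equiv Equiv.Perm Finset Function Matrix

section CB
variable {α : Type*} [CommRing α] {m R : ℕ}

local notation "ε " σ:arg => ((Equiv.Perm.sign σ : ℤ) : α)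

theorem binet_aux {M : Matrix (Fin m) (Fin R) α} {N : Matrix (Fin R) (Fin m) α} {p : Fin m → Fin R}
    (H : ¬Function.Injective p) :
    (∑ σ : Equiv.Perm (Fin m), ε σ * ∏ x, M (σ x) (p x) * N (p x) x) = 0 := by
  obtain ⟨i, j, hpij, hij⟩ : ∃ i j, p i = p j ∧ i ≠ j := by
    rw [Injective] at H
    push_neg at H
    obtain ⟨i, j, h1, h2⟩ := H
    exact ⟨i, j, h1, h2⟩
  exact
    sum_involution (fun σ _ => σ * Equiv.swap i j)
      (fun σ _ => by
        have : (∏ x, M (σ x) (p x)) = ∏ x, M ((σ * Equiv.swap i j) x) (p x) :=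
          Fintype.prod_equiv (swap i j) _ _ (by simp [apply_swap_eq_self hpij])
        simp [this, sign_swap hij, -sign_swap', prod_mul_distrib])
      (fun σ _ _ => (not_congr mul_swap_eq_iff).mpr hij) (fun _ _ => mem_univ _) fun σ _ =>
      mul_swap_involutive i j σ

theorem sum_perm_perm (M N : Matrix (Fin m) (Fin m) α) :
    (∑ τ : Perm (Fin m), ∑ σ : Perm (Fin m), ε σ * ∏ i, M (σ i) (τ i) * N (τ i) i) =
      det M * det N :=
  calc
    _ = ∑ σ : Perm (Fin m), ∑ τ : Perm (Fin m), (∏ i, N (σ i) i) * ε τ * ∏ j, M (τ j) (σ j) := by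
      simp only [mul_comm, mul_left_comm, prod_mul_distrib, mul_assoc]
    _ = ∑ σ : Perm (Fin m), ∑ τ : Perm (Fin m), (∏ i, N (σ i) i) * (ε σ * ε τ) * ∏ i, M (τ i) i :=
      (sum_congr rfl fun σ _ =>
        Fintype.sum_equiv (Equiv.mulRight σ⁻¹) _ _ fun τ => by
          have : (∏ j, M (τ j) (σ j)) = ∏ j, M ((τ * σ⁻¹) j) j := by
            rw [← (σ⁻¹ : _ ≃ _).prod_comp]
            simp only [Equiv.Perm.coe_mul, Equiv.Perm.coe_inv, Equiv.apply_symm_apply, Function.comp_apply]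
          have h : ε σ * ε (τ * σ⁻¹) = ε τ :=
            calc
              ε σ * ε (τ * σ⁻¹) = ε (τ * σ⁻¹ * σ) := by
                rw [mul_comm, sign_mul (τ * σ⁻¹)]
                simp only [Int.cast_mul, Units.val_mul]
              _ = ε τ := by simp only [inv_mul_cancel_right]
          simp_rw [Equiv.coe_mulRight, h]
          simp only [this])
    _ = det M * det N := by
      simp only [det_apply', Finset.mul_sum, mul_comm, mul_left_comm, mul_assoc]
end CB

section CB2
variable {α : Type*} [CommRing α] {m R : ℕ}
local notation "ε " σ:arg => ((Equiv.Perm.sign σ : ℤ) : α)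

theorem image_oif (u : Finset (Fin R)) (hu : u.card = m) (τ : Equiv.Perm (Fin m)) :
    Finset.image (fun i => (u.orderIsoOfFin hu (τ i) : Fin R)) Finset.univ = u := by
  ext x
  simp only [Finset.mem_image, Finset.mem_univ, true_and]
  constructor
  · rintro ⟨i, rfl⟩; exact (u.orderIsoOfFin hu (τ i)).2
  · intro hx
    exact ⟨τ⁻¹ ((u.orderIsoOfFin hu).symm ⟨x, hx⟩), by simp⟩

theorem binet (M : Matrix (Fin m) (Fin R) α) (N : Matrix (Fin R) (Fin m) α) :
    det (M * N) = ∑ u : {u : Finset (Fin R) // u.card = m},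
      det (M.submatrix id (fun k => (u.1.orderIsoOfFin u.2 k : Fin R))) *
      det (N.submatrix (fun k => (u.1.orderIsoOfFin u.2 k : Fin R)) id) := by
  classical
  calc
    det (M * N) = ∑ p : Fin m → Fin R, ∑ σ : Perm (Fin m), ε σ * ∏ i, M (σ i) (p i) * N (p i) i := by
      rw [det_apply']
      simp_rw [Matrix.mul_apply, prod_univ_sum, mul_sum, Fintype.piFinset_univ]
      rw [Finset.sum_comm]
    _ = ∑ p : Fin m → Fin R with Function.Injective p,
          ∑ σ : Perm (Fin m), ε σ * ∏ i, M (σ i) (p i) * N (p i) i := by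
      refine (sum_subset (filter_subset _ _) fun f _ hinj ↦ binet_aux ?_).symm
      simpa only [true_and, mem_filter, mem_univ] using hinj
    _ = ∑ x : {u : Finset (Fin R) // u.card = m} × Perm (Fin m),
          ∑ σ : Perm (Fin m), ε σ *
            ∏ i, M (σ i) (x.1.1.orderIsoOfFin x.1.2 (x.2 i) : Fin R) *
              N (x.1.1.orderIsoOfFin x.1.2 (x.2 i) : Fin R) i := by
      refine (Finset.sum_bij
        (i := fun (x : {u : Finset (Fin R) // u.card = m} × Perm (Fin m)) _ =>
          fun i => (x.1.1.orderIsoOfFin x.1.2 (x.2 i) : Fin R)) ?_ ?_ ?_ ?_).symm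
      · rintro ⟨⟨u, hu⟩, τ⟩ -
        refine mem_filter.2 ⟨mem_univ _, fun a b h => τ.injective ?_⟩
        exact (u.orderIsoOfFin hu).injective (Subtype.ext h)
      · rintro ⟨⟨u, hu⟩, τ⟩ h1 ⟨⟨v, hv⟩, ρ⟩ h2 h
        have huv : u = v := by
          rw [← image_oif u hu τ, ← image_oif v hv ρ]
          exact Finset.image_congr fun i _ => congrFun h i
        subst huv
        simp only [Prod.mk.injEq, Subtype.mk.injEq]
        refine ⟨trivial, Equiv.ext fun i => ?_⟩
        exact (u.orderIsoOfFin hu).injective (Subtype.ext (congrFun h i))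
      · intro p hp
        have hpinj : Function.Injective p := (mem_filter.1 hp).2
        have hcard : (Finset.image p Finset.univ).card = m := by
          rw [Finset.card_image_of_injective _ hpinj, card_univ, Fintype.card_fin]
        have hbij : Function.Bijective
            (fun i => (⟨p i, mem_image_of_mem p (mem_univ i)⟩ :
              {x // x ∈ Finset.image p Finset.univ})) := by
          refine (Fintype.bijective_iff_injective_and_card _).2
            ⟨fun a b h => hpinj (congrArg Subtype.val h), ?_⟩
          rw [Fintype.card_coe, hcard, Fintype.card_fin]
        refine ⟨⟨⟨Finset.image p Finset.univ, hcard⟩,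
          (Equiv.ofBijective _ hbij).trans
            ((Finset.image p Finset.univ).orderIsoOfFin hcard).symm.toEquiv⟩,
          mem_univ _, ?_⟩
        funext i
        simp [Equiv.ofBijective]
      · rintro ⟨⟨u, hu⟩, τ⟩ -
        rfl
    _ = _ := by
      rw [Fintype.sum_prod_type]
      exact Finset.sum_congr rfl fun u _ =>
        sum_perm_perm (M.submatrix id (fun k => (u.1.orderIsoOfFin u.2 k : Fin R)))
          (N.submatrix (fun k => (u.1.orderIsoOfFin u.2 k : Fin R)) id)
end CB2


theorem coeff_prod_linear {α : Type*} [CommRing α] {m : ℕ} (w : Fin m → Fin m → α) :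
    MvPolynomial.coeff (∑ i : Fin m, Finsupp.single i 1)
      (∏ k : Fin m, ∑ i : Fin m, MvPolynomial.X i * MvPolynomial.C (w i k)) =
    ∑ σ : Equiv.Perm (Fin m), ∏ k, w (σ k) k := by
  classical
  rw [Fintype.prod_sum]
  have h1 : ∀ g : Fin m → Fin m,
      (∏ k, MvPolynomial.X (g k) * MvPolynomial.C (w (g k) k)) =
      MvPolynomial.monomial (∑ k, Finsupp.single (g k) 1) (∏ k, w (g k) k) := by
    intro g
    calc ∏ k, MvPolynomial.X (g k) * MvPolynomial.C (w (g k) k)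
        = ∏ k, MvPolynomial.C (w (g k) k) *
            (MvPolynomial.monomial (Finsupp.single (g k) 1) (1 : α)) := by
          refine Finset.prod_congr rfl fun k _ => ?_
          rw [mul_comm]; rfl
      _ = (∏ k, MvPolynomial.C (w (g k) k)) *
            ∏ k, MvPolynomial.monomial (Finsupp.single (g k) 1) (1 : α) :=
          Finset.prod_mul_distrib
      _ = MvPolynomial.C (∏ k, w (g k) k) *
            ∏ k, MvPolynomial.monomial (Finsupp.single (g k) 1) (1 : α) := by rw [map_prod]
      _ = _ := (MvPolynomial.monomial_sum_index _ _ _).symm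
  rw [MvPolynomial.coeff_sum]
  simp only [h1, MvPolynomial.coeff_monomial]
  have key : ∀ g : Fin m → Fin m,
      ((∑ k, Finsupp.single (g k) 1) = ∑ i : Fin m, Finsupp.single i 1) ↔ Function.Bijective g := by
    intro g
    constructor
    · intro h
      rw [← Finite.injective_iff_bijective]
      intro a b hab
      have h2 := DFunLike.congr_fun h (g a)
      simp only [Finsupp.finset_sum_apply, Finsupp.single_apply] at h2
      rw [Finset.sum_ite_eq' Finset.univ (g a) (fun _ => 1), if_pos (mem_univ _)] at h2
      have hcard : (Finset.univ.filter (fun x => g x = g a)).card = 1 := by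
        rw [Finset.card_filter]; exact h2
      exact Finset.card_le_one.1 hcard.le a (by simp [Finset.mem_filter, hab]) b
        (by simp [Finset.mem_filter, hab])
    · intro hg
      exact Fintype.sum_bijective g hg _ _ fun x => rfl
  calc ∑ g : Fin m → Fin m,
        (if (∑ k, Finsupp.single (g k) 1) = ∑ i : Fin m, Finsupp.single i 1
          then ∏ k, w (g k) k else 0)
      = ∑ g : Fin m → Fin m, (if Function.Bijective g then ∏ k, w (g k) k else 0) := by
        refine Finset.sum_congr rfl fun g _ => ?_
        rw [if_congr (key g) rfl rfl]
    _ = ∑ g : Fin m → Fin m with Function.Bijective g, ∏ k, w (g k) k :=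
        (Finset.sum_filter _ _).symm
    _ = ∑ σ : Equiv.Perm (Fin m), ∏ k, w (σ k) k :=
        Finset.sum_bij (fun p h => Equiv.ofBijective p (mem_filter.1 h).2)
          (fun _ _ => mem_univ _) (fun _ _ _ _ h => by injection h)
          (fun b _ => ⟨b, mem_filter.2 ⟨mem_univ _, b.bijective⟩, coe_fn_injective rfl⟩)
          fun _ _ => rfl

end Aux

open Finset Equiv Function MvPolynomial

section Main

/-- For `A ∈ ℝ^{I×R}`, `B ∈ ℝ^{J×R}`, `d_1,…,d_m ∈ ℝ^R` and
`2 ≤ m ≤ min(I,J,R)`: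
`D^{m−1}(A Diag(d_1) Bᵀ, …, A Diag(d_m) Bᵀ) = C_m(A) · Diag(PC_m([d_1 … d_m])) · C_m(B)ᵀ`,
where `PC_m([d_1 … d_m])` is the `m`-th permanental compound of the `R × m` matrix with
columns `d_1,…,d_m`, i.e. the vector (indexed by `m`-element subsets `u` of `{1,…,R}`) of
permanents of its `m × m` submatrices. -/
theorem stmt17 {I J R m : ℕ} (A : Matrix (Fin I) (Fin R) ℝ) (B : Matrix (Fin J) (Fin R) ℝ)
    (d : Fin m → Fin R → ℝ) (hm2 : 2 ≤ m) (hmI : m ≤ I) (hmJ : m ≤ J) (hmR : m ≤ R) :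
    polarizedCompound (fun i => A * Matrix.diagonal (d i) * Bᵀ) =
      compound m A *
        Matrix.diagonal (fun u : {u : Finset (Fin R) // u.card = m} =>
          permanent (Matrix.of fun a b : Fin m => d b (u.1.orderIsoOfFin u.2 a : Fin R))) *
        (compound m B)ᵀ := by
  classical
  funext s t
  set P : Fin R → MvPolynomial (Fin m) ℝ := fun r => ∑ i : Fin m, X i * C (d i r) with hP
  have hent : ∀ (i : Fin m) (x : Fin I) (y : Fin J),
      (A * Matrix.diagonal (d i) * Bᵀ) x y = ∑ r, A x r * d i r * B y r := by
    intro i x y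
    rw [Matrix.mul_apply]
    exact Finset.sum_congr rfl fun r _ => by rw [Matrix.mul_diagonal, Matrix.transpose_apply]
  have hQ : (Matrix.of fun a b : Fin m =>
        ∑ i : Fin m, X i * C ((A * Matrix.diagonal (d i) * Bᵀ)
          (s.1.orderIsoOfFin s.2 a : Fin I) (t.1.orderIsoOfFin t.2 b : Fin J)))
      = (Matrix.of fun (a : Fin m) (r : Fin R) =>
            C (A (s.1.orderIsoOfFin s.2 a : Fin I) r) * P r) *
        (Matrix.of fun (r : Fin R) (b : Fin m) =>
            (C (B (t.1.orderIsoOfFin t.2 b : Fin J) r) : MvPolynomial (Fin m) ℝ)) := by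
    ext a b : 2
    simp only [Matrix.of_apply, Matrix.mul_apply, hent, map_sum, Finset.mul_sum, Finset.sum_mul,
      hP]
    rw [Finset.sum_comm]
    congr 1
    refine Finset.sum_congr rfl fun r _ => Finset.sum_congr rfl fun i _ => ?_
    rw [map_mul, map_mul]
    ring
  have hLHS : polarizedCompound (fun i => A * Matrix.diagonal (d i) * Bᵀ) s t =
      MvPolynomial.coeff (∑ i : Fin m, Finsupp.single i 1)
        (Matrix.det ((Matrix.of fun (a : Fin m) (r : Fin R) =>
              C (A (s.1.orderIsoOfFin s.2 a : Fin I) r) * P r) *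
          (Matrix.of fun (r : Fin R) (b : Fin m) =>
              (C (B (t.1.orderIsoOfFin t.2 b : Fin J) r) : MvPolynomial (Fin m) ℝ)))) := by
    rw [← hQ]
    rfl
  rw [hLHS, binet, MvPolynomial.coeff_sum]
  have hdA : ∀ u : {u : Finset (Fin R) // u.card = m},
      Matrix.det ((Matrix.of fun (a : Fin m) (r : Fin R) =>
          C (A (s.1.orderIsoOfFin s.2 a : Fin I) r) * P r).submatrix id
          (fun k => (u.1.orderIsoOfFin u.2 k : Fin R)))
      = (∏ k, P (u.1.orderIsoOfFin u.2 k : Fin R)) *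
          C (Matrix.det (Matrix.of fun a k : Fin m =>
            A (s.1.orderIsoOfFin s.2 a : Fin I) (u.1.orderIsoOfFin u.2 k : Fin R))) := by
    intro u
    rw [show (Matrix.of fun (a : Fin m) (r : Fin R) =>
          C (A (s.1.orderIsoOfFin s.2 a : Fin I) r) * P r).submatrix id
          (fun k => (u.1.orderIsoOfFin u.2 k : Fin R)) =
        Matrix.of (fun a k : Fin m => (fun k => P (u.1.orderIsoOfFin u.2 k : Fin R)) k *
          (Matrix.of fun a k : Fin m =>
            C (A (s.1.orderIsoOfFin s.2 a : Fin I) (u.1.orderIsoOfFin u.2 k : Fin R))) a k) from by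
      ext a k : 2
      simp [mul_comm]]
    rw [Matrix.det_mul_row]
    congr 1
    rw [RingHom.map_det]
    rfl
  have hdB : ∀ u : {u : Finset (Fin R) // u.card = m},
      Matrix.det ((Matrix.of fun (r : Fin R) (b : Fin m) =>
          (C (B (t.1.orderIsoOfFin t.2 b : Fin J) r) : MvPolynomial (Fin m) ℝ)).submatrix
          (fun k => (u.1.orderIsoOfFin u.2 k : Fin R)) id)
      = C (Matrix.det (Matrix.of fun b k : Fin m =>
          B (t.1.orderIsoOfFin t.2 b : Fin J) (u.1.orderIsoOfFin u.2 k : Fin R))) := by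
    intro u
    rw [← Matrix.det_transpose ((Matrix.of fun (r : Fin R) (b : Fin m) =>
          C (B (t.1.orderIsoOfFin t.2 b : Fin J) r)).submatrix
          (fun k => (u.1.orderIsoOfFin u.2 k : Fin R)) id), RingHom.map_det]
    rfl
  simp only [hdA, hdB]
  have hRHS : (compound m A *
        Matrix.diagonal (fun u : {u : Finset (Fin R) // u.card = m} =>
          permanent (Matrix.of fun a b : Fin m => d b (u.1.orderIsoOfFin u.2 a : Fin R))) *
        (compound m B)ᵀ) s t =
      ∑ u : {u : Finset (Fin R) // u.card = m},
        Matrix.det (Matrix.of fun a k : Fin m =>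
            A (s.1.orderIsoOfFin s.2 a : Fin I) (u.1.orderIsoOfFin u.2 k : Fin R)) *
          permanent (Matrix.of fun a b : Fin m => d b (u.1.orderIsoOfFin u.2 a : Fin R)) *
          Matrix.det (Matrix.of fun b k : Fin m =>
            B (t.1.orderIsoOfFin t.2 b : Fin J) (u.1.orderIsoOfFin u.2 k : Fin R)) := by
    rw [Matrix.mul_apply]
    refine Finset.sum_congr rfl fun u _ => ?_
    rw [Matrix.mul_diagonal, Matrix.transpose_apply]
    rfl
  rw [hRHS]
  refine Finset.sum_congr rfl fun u _ => ?_
  rw [show (∏ k, P (u.1.orderIsoOfFin u.2 k : Fin R)) *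
        C (Matrix.det (Matrix.of fun a k : Fin m =>
          A (s.1.orderIsoOfFin s.2 a : Fin I) (u.1.orderIsoOfFin u.2 k : Fin R))) *
      C (Matrix.det (Matrix.of fun b k : Fin m =>
          B (t.1.orderIsoOfFin t.2 b : Fin J) (u.1.orderIsoOfFin u.2 k : Fin R))) =
      C (Matrix.det (Matrix.of fun a k : Fin m =>
          A (s.1.orderIsoOfFin s.2 a : Fin I) (u.1.orderIsoOfFin u.2 k : Fin R))) *
      (C (Matrix.det (Matrix.of fun b k : Fin m =>
          B (t.1.orderIsoOfFin t.2 b : Fin J) (u.1.orderIsoOfFin u.2 k : Fin R))) *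
        ∏ k, P (u.1.orderIsoOfFin u.2 k : Fin R)) from by ring]
  rw [MvPolynomial.coeff_C_mul, MvPolynomial.coeff_C_mul]
  have hperm : MvPolynomial.coeff (∑ i : Fin m, Finsupp.single i 1)
      (∏ k, P (u.1.orderIsoOfFin u.2 k : Fin R)) =
      permanent (Matrix.of fun a b : Fin m => d b (u.1.orderIsoOfFin u.2 a : Fin R)) := by
    rw [show (∏ k, P (u.1.orderIsoOfFin u.2 k : Fin R)) =
        ∏ k : Fin m, ∑ i : Fin m, X i * C (d i (u.1.orderIsoOfFin u.2 k : Fin R)) from rfl]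
    rw [coeff_prod_linear (fun i k => d i (u.1.orderIsoOfFin u.2 k : Fin R))]
    rfl
  rw [hperm]
  ring

end Main
end
end

section
/- Let A ∈ ℝ^{I×R}, B ∈ ℝ^{J×R}, C ∈ ℝ^{K×R}, let T = [A,B,C]_R, and let 2 ≤ m ≤ min(I,J,K,R). Then R_m(T) = [C_m(A) ⊙ C_m(B)] · R_m(C)^T, where R_m(T) is the C(I,m)C(J,m) × K^m matrix whose column indexed by (j_1,…,j_m) ∈ {1,…,K}^m is vec(D^{m−1}(T_{j_1},…,T_{j_m})), with T_1,…,T_K the frontal slices of T. -/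
open scoped BigOperators Matrix

noncomputable section

/-- The Khatri–Rao (column-wise Kronecker) product of two matrices. -/
def khatriRao {α β γ : Type*} (A : Matrix α γ ℝ) (B : Matrix β γ ℝ) : Matrix (α × β) γ ℝ :=
  Matrix.of fun p r => A p.1 r * B p.2 r

/-- The matrix `R_m(C)`: rows are indexed by tuples `(i_1,…,i_m) ∈ {1,…,K}^m`, columns by
`m`-element subsets `{j_1 < … < j_m}` of the columns of `C`, and the corresponding entry
is the permanent of the `m × m` submatrix of `C` on rows `i_1,…,i_m` and columns
`j_1,…,j_m`. -/
def Rmat {K R : ℕ} (m : ℕ) (C : Matrix (Fin K) (Fin R) ℝ) :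
    Matrix (Fin m → Fin K) {t : Finset (Fin R) // t.card = m} ℝ :=
  Matrix.of fun i t =>
    permanent (Matrix.of fun a b : Fin m => C (i a) (t.1.orderIsoOfFin t.2 b : Fin R))

section Stmt18Aux
open Finset Equiv MvPolynomial

lemma sum_perm_transpose {m : ℕ} (M : Fin m → Fin m → ℝ) :
    ∑ q : Equiv.Perm (Fin m), ∏ b, M (q b) b = ∑ q : Equiv.Perm (Fin m), ∏ b, M b (q b) := by
  refine Fintype.sum_equiv (Equiv.inv (Equiv.Perm (Fin m))) _ _ fun q => ?_
  simp only [Equiv.inv_apply]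
  rw [← Equiv.prod_comp q (fun x => M x (q⁻¹ x))]
  simp

lemma coeff_prod_X {m : ℕ} (q : Fin m → Fin m) :
    MvPolynomial.coeff (∑ i : Fin m, Finsupp.single i 1)
      (∏ b : Fin m, MvPolynomial.X (q b) : MvPolynomial (Fin m) ℝ)
      = if Function.Bijective q then 1 else 0 := by
  have h1 : (∏ b : Fin m, (MvPolynomial.X (q b) : MvPolynomial (Fin m) ℝ))
      = MvPolynomial.monomial (∑ b : Fin m, Finsupp.single (q b) 1) 1 := by
    rw [MvPolynomial.monomial_sum_one]
    exact Finset.prod_congr rfl fun b _ => rfl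
  rw [h1, MvPolynomial.coeff_monomial]
  by_cases hq : Function.Bijective q
  · rw [if_pos hq, if_pos]
    exact Fintype.sum_bijective q hq _ _ fun b => rfl
  · rw [if_neg hq, if_neg]
    intro hcontra
    rw [← Finite.injective_iff_bijective] at hq
    simp only [Function.Injective] at hq
    push_neg at hq
    obtain ⟨b, b', hqq, hbb⟩ := hq
    have h2 := congrArg (fun ν : Fin m →₀ ℕ => ν (q b)) hcontra
    simp only [Finset.sum_apply', Finsupp.single_apply] at h2
    have hrhs : ∑ i : Fin m, (if i = q b then 1 else 0) = 1 := by
      simp [Finset.sum_ite_eq']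
    have hge : 2 ≤ ∑ b'' : Fin m, (if q b'' = q b then 1 else 0) := by
      have hsub : ({b, b'} : Finset (Fin m)) ⊆ Finset.univ := Finset.subset_univ _
      calc 2 = ∑ b'' ∈ ({b, b'} : Finset (Fin m)), (if q b'' = q b then 1 else 0) := by
              rw [Finset.sum_pair hbb]; simp [hqq]
        _ ≤ _ := Finset.sum_le_sum_of_subset hsub
    omega

lemma sum_bij_fun {β : Type*} [AddCommMonoid β] {m : ℕ} (F : (Fin m → Fin m) → β) :
    ∑ q : Fin m → Fin m, (if Function.Bijective q then F q else 0)
      = ∑ q : Equiv.Perm (Fin m), F q := by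
  rw [← Finset.sum_filter]
  exact (Finset.sum_bij (fun (p : Equiv.Perm (Fin m)) (_ : p ∈ Finset.univ) => (p : Fin m → Fin m))
    (fun p _ => Finset.mem_filter.2 ⟨Finset.mem_univ _, p.bijective⟩)
    (fun _ _ _ _ h => Equiv.coe_fn_injective h)
    (fun p hp => ⟨Equiv.ofBijective p (Finset.mem_filter.1 hp).2, Finset.mem_univ _, rfl⟩)
    (fun _ _ => rfl)).symm

lemma coeff_det {m : ℕ} (e : Fin m → Fin m → Fin m → ℝ) :
    MvPolynomial.coeff (∑ i : Fin m, Finsupp.single i 1)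
      (Matrix.det (Matrix.of fun a b : Fin m =>
        ∑ i : Fin m, MvPolynomial.X i * MvPolynomial.C (e i a b)))
    = ∑ σ : Equiv.Perm (Fin m), ((Equiv.Perm.sign σ : ℤ) : ℝ) *
        ∑ q : Equiv.Perm (Fin m), ∏ b, e (q b) (σ b) b := by
  rw [Matrix.det_apply', MvPolynomial.coeff_sum]
  refine Finset.sum_congr rfl fun σ _ => ?_
  simp only [Matrix.of_apply]
  rw [Finset.prod_univ_sum]
  simp only [Fintype.piFinset_univ, Finset.prod_mul_distrib]
  have hc : ((Equiv.Perm.sign σ : ℤ) : MvPolynomial (Fin m) ℝ)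
      = MvPolynomial.C ((Equiv.Perm.sign σ : ℤ) : ℝ) :=
      (map_intCast (MvPolynomial.C : ℝ →+* MvPolynomial (Fin m) ℝ) ((Equiv.Perm.sign σ : ℤ))).symm
  rw [hc, MvPolynomial.coeff_C_mul]
  congr 1
  rw [MvPolynomial.coeff_sum]
  simp only [← map_prod]
  have key : ∀ x : Fin m → Fin m,
      MvPolynomial.coeff (∑ i : Fin m, Finsupp.single i 1)
        ((∏ b, MvPolynomial.X (x b)) * MvPolynomial.C (∏ b, e (x b) (σ b) b))
      = (if Function.Bijective x then (∏ b, e (x b) (σ b) b) else 0) := by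
    intro x
    rw [mul_comm, MvPolynomial.coeff_C_mul, coeff_prod_X, mul_ite, mul_one, mul_zero]
  simp only [key]
  exact sum_bij_fun _

lemma aux_image_ord {R m : ℕ} (ω : Finset (Fin R)) (h : ω.card = m) :
    Finset.image (fun b : Fin m => (ω.orderIsoOfFin h b : Fin R)) Finset.univ = ω := by
  ext x
  simp only [Finset.mem_image, Finset.mem_univ, true_and]
  constructor
  · rintro ⟨b, rfl⟩; exact (ω.orderIsoOfFin h b).2
  · intro hx; exact ⟨(ω.orderIsoOfFin h).symm ⟨x, hx⟩, by simp⟩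

lemma ord_inj {R m : ℕ} (ω : Finset (Fin R)) (h : ω.card = m) :
    Function.Injective (fun b : Fin m => (ω.orderIsoOfFin h b : Fin R)) := by
  intro x y hxy
  exact (ω.orderIsoOfFin h).injective (Subtype.coe_injective hxy)

lemma step1 {m R : ℕ} (f g c : Fin m → Fin R → ℝ) :
    ∑ σ : Equiv.Perm (Fin m), ((Equiv.Perm.sign σ : ℤ) : ℝ) *
      ∑ q : Equiv.Perm (Fin m), ∏ b, (∑ r, f (σ b) r * g b r * c (q b) r)
    = ∑ p : Fin m → Fin R,
        (∑ σ : Equiv.Perm (Fin m), ((Equiv.Perm.sign σ : ℤ) : ℝ) * ∏ b, f (σ b) (p b)) *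
        (∏ b, g b (p b)) *
        (∑ q : Equiv.Perm (Fin m), ∏ b, c (q b) (p b)) := by
  calc ∑ σ : Equiv.Perm (Fin m), ((Equiv.Perm.sign σ : ℤ) : ℝ) *
      ∑ q : Equiv.Perm (Fin m), ∏ b, (∑ r, f (σ b) r * g b r * c (q b) r)
      = ∑ σ : Equiv.Perm (Fin m), ∑ q : Equiv.Perm (Fin m), ∑ p : Fin m → Fin R,
          ((Equiv.Perm.sign σ : ℤ) : ℝ) *
          ((∏ b, f (σ b) (p b)) * (∏ b, g b (p b)) * (∏ b, c (q b) (p b))) := by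
        refine Finset.sum_congr rfl fun σ _ => ?_
        rw [Finset.mul_sum]
        refine Finset.sum_congr rfl fun q _ => ?_
        rw [Finset.prod_univ_sum, Fintype.piFinset_univ, Finset.mul_sum]
        refine Finset.sum_congr rfl fun p _ => ?_
        rw [← Finset.prod_mul_distrib, ← Finset.prod_mul_distrib]
    _ = ∑ σ : Equiv.Perm (Fin m), ∑ p : Fin m → Fin R, ∑ q : Equiv.Perm (Fin m),
          ((Equiv.Perm.sign σ : ℤ) : ℝ) *
          ((∏ b, f (σ b) (p b)) * (∏ b, g b (p b)) * (∏ b, c (q b) (p b))) :=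
        Finset.sum_congr rfl fun σ _ => Finset.sum_comm
    _ = ∑ p : Fin m → Fin R, ∑ σ : Equiv.Perm (Fin m), ∑ q : Equiv.Perm (Fin m),
          ((Equiv.Perm.sign σ : ℤ) : ℝ) *
          ((∏ b, f (σ b) (p b)) * (∏ b, g b (p b)) * (∏ b, c (q b) (p b))) :=
        Finset.sum_comm
    _ = _ := by
        refine Finset.sum_congr rfl fun p _ => ?_
        rw [Finset.sum_mul, Finset.sum_mul]
        refine Finset.sum_congr rfl fun σ _ => ?_
        rw [Finset.mul_sum]
        exact Finset.sum_congr rfl fun q _ => by ring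

lemma cb {m R : ℕ} (f g c : Fin m → Fin R → ℝ) :
    ∑ σ : Equiv.Perm (Fin m), ((Equiv.Perm.sign σ : ℤ) : ℝ) *
      ∑ q : Equiv.Perm (Fin m), ∏ b, (∑ r, f (σ b) r * g b r * c (q b) r)
    = ∑ ω : {t : Finset (Fin R) // t.card = m},
        Matrix.det (Matrix.of fun a b : Fin m => f a (ω.1.orderIsoOfFin ω.2 b)) *
        Matrix.det (Matrix.of fun a b : Fin m => g a (ω.1.orderIsoOfFin ω.2 b)) *
        (∑ q : Equiv.Perm (Fin m), ∏ b, c (q b) (ω.1.orderIsoOfFin ω.2 b)) := by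
  -- Step 1: expand into a sum over functions p : Fin m → Fin R
  rw [step1 f g c]
  -- Step 2: rewrite the sign-sum as a determinant
  have step2 : ∀ p : Fin m → Fin R,
      (∑ σ : Equiv.Perm (Fin m), ((Equiv.Perm.sign σ : ℤ) : ℝ) * ∏ b, f (σ b) (p b))
      = Matrix.det (Matrix.of fun a b : Fin m => f a (p b)) := fun p =>
    (Matrix.det_apply' (Matrix.of fun a b : Fin m => f a (p b))).symm
  simp only [step2]
  -- Step 3: restrict to injective p
  rw [← Finset.sum_filter_add_sum_filter_not Finset.univ Function.Injective]
  have step3 : ∑ p ∈ Finset.univ.filter (fun p : Fin m → Fin R => ¬ Function.Injective p),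
      Matrix.det (Matrix.of fun a b : Fin m => f a (p b)) * (∏ b, g b (p b)) *
        (∑ q : Equiv.Perm (Fin m), ∏ b, c (q b) (p b)) = 0 := by
    refine Finset.sum_eq_zero fun p hp => ?_
    have hp' : ¬ Function.Injective p := (Finset.mem_filter.1 hp).2
    have : ∃ b b', p b = p b' ∧ b ≠ b' := by
      simp only [Function.Injective] at hp'; push_neg at hp'
      obtain ⟨b, b', h1, h2⟩ := hp'; exact ⟨b, b', h1, h2⟩
    obtain ⟨b, b', heq, hne⟩ := this
    have hdet : Matrix.det (Matrix.of fun a b : Fin m => f a (p b)) = 0 :=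
      Matrix.det_zero_of_column_eq hne (fun k => by simp [heq])
    rw [hdet, zero_mul, zero_mul]
  rw [step3, add_zero]
  -- Step 4: reindex injective p by pairs (ω, τ)
  have step4 : ∑ p ∈ Finset.univ.filter (fun p : Fin m → Fin R => Function.Injective p),
      Matrix.det (Matrix.of fun a b : Fin m => f a (p b)) * (∏ b, g b (p b)) *
        (∑ q : Equiv.Perm (Fin m), ∏ b, c (q b) (p b))
      = ∑ x : {t : Finset (Fin R) // t.card = m} × Equiv.Perm (Fin m),
          Matrix.det (Matrix.of fun a b : Fin m => f a (x.1.1.orderIsoOfFin x.1.2 (x.2 b))) *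
          (∏ b, g b (x.1.1.orderIsoOfFin x.1.2 (x.2 b))) *
          (∑ q : Equiv.Perm (Fin m), ∏ b, c (q b) (x.1.1.orderIsoOfFin x.1.2 (x.2 b))) := by
    refine (Finset.sum_bij
      (i := fun (x : {t : Finset (Fin R) // t.card = m} × Equiv.Perm (Fin m)) _ =>
        (fun b => (x.1.1.orderIsoOfFin x.1.2 (x.2 b) : Fin R)))
      ?_ ?_ ?_ ?_).symm
    · intro x _
      refine Finset.mem_filter.2 ⟨Finset.mem_univ _, ?_⟩
      exact (ord_inj x.1.1 x.1.2).comp x.2.injective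
    · -- injectivity
      rintro ⟨ω, τ⟩ _ ⟨ω', τ'⟩ _ hfun
      simp only at hfun
      have him : ω.1 = ω'.1 := by
        have h1 := aux_image_ord ω.1 ω.2
        have h2 := aux_image_ord ω'.1 ω'.2
        calc ω.1 = Finset.image (fun b : Fin m => (ω.1.orderIsoOfFin ω.2 (τ b) : Fin R))
                Finset.univ := by
              rw [show (fun b : Fin m => (ω.1.orderIsoOfFin ω.2 (τ b) : Fin R))
                  = (fun b : Fin m => (ω.1.orderIsoOfFin ω.2 b : Fin R)) ∘ τ from rfl,
                ← Finset.image_image, Finset.image_univ_equiv, h1]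
          _ = Finset.image (fun b : Fin m => (ω'.1.orderIsoOfFin ω'.2 (τ' b) : Fin R))
                Finset.univ := by rw [hfun]
          _ = ω'.1 := by
              rw [show (fun b : Fin m => (ω'.1.orderIsoOfFin ω'.2 (τ' b) : Fin R))
                  = (fun b : Fin m => (ω'.1.orderIsoOfFin ω'.2 b : Fin R)) ∘ τ' from rfl,
                ← Finset.image_image, Finset.image_univ_equiv, h2]
      obtain ⟨ω, hω⟩ := ω
      obtain ⟨ω', hω'⟩ := ω'
      simp only at him
      subst him
      simp only [Prod.mk.injEq, Subtype.mk.injEq, true_and]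
      refine Equiv.ext fun b => ?_
      have := congrFun hfun b
      simp only at this
      exact ord_inj ω hω this
    · -- surjectivity
      intro p hp
      have hpinj : Function.Injective p := (Finset.mem_filter.1 hp).2
      have hcard : (Finset.image p Finset.univ).card = m := by
        rw [Finset.card_image_of_injective _ hpinj, Finset.card_univ, Fintype.card_fin]
      set ω : {t : Finset (Fin R) // t.card = m} := ⟨Finset.image p Finset.univ, hcard⟩ with hωdef
      have hmem : ∀ b, p b ∈ Finset.image p Finset.univ := fun b =>
        Finset.mem_image.2 ⟨b, Finset.mem_univ _, rfl⟩
      have hqinj : Function.Injective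
          (fun b => ((Finset.image p Finset.univ).orderIsoOfFin hcard).symm ⟨p b, hmem b⟩) := by
        intro x y hxy
        have := congrArg (fun z => (((Finset.image p Finset.univ).orderIsoOfFin hcard) z : Fin R)) hxy
        simp only [OrderIso.apply_symm_apply] at this
        exact hpinj this
      refine ⟨⟨ω, Equiv.ofBijective _ ((Finite.injective_iff_bijective).1 hqinj)⟩,
        Finset.mem_univ _, ?_⟩
      funext b
      simp [Equiv.ofBijective_apply, hωdef]
      exact congrArg Subtype.val (((Finset.image p Finset.univ).orderIsoOfFin hcard).apply_symm_apply ⟨p b, hmem b⟩)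
    · intro x _
      rfl
  rw [step4]
  -- Step 5: sum over pairs = double sum, and evaluate inner sum over τ
  rw [Fintype.sum_prod_type]
  refine Finset.sum_congr rfl fun ω _ => ?_
  -- for fixed ω, sum over τ
  have hdet : ∀ τ : Equiv.Perm (Fin m),
      Matrix.det (Matrix.of fun a b : Fin m => f a (ω.1.orderIsoOfFin ω.2 (τ b)))
      = ((Equiv.Perm.sign τ : ℤ) : ℝ) *
        Matrix.det (Matrix.of fun a b : Fin m => f a (ω.1.orderIsoOfFin ω.2 b)) := by
    intro τ
    have : (Matrix.of fun a b : Fin m => f a (ω.1.orderIsoOfFin ω.2 (τ b)))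
        = (Matrix.of fun a b : Fin m => f a (ω.1.orderIsoOfFin ω.2 b)).submatrix id τ := rfl
    rw [this, Matrix.det_permute']
  have hP : ∀ τ : Equiv.Perm (Fin m),
      (∑ q : Equiv.Perm (Fin m), ∏ b, c (q b) (ω.1.orderIsoOfFin ω.2 (τ b)))
      = ∑ q : Equiv.Perm (Fin m), ∏ b, c (q b) (ω.1.orderIsoOfFin ω.2 b) := by
    intro τ
    have h1 : ∀ q : Equiv.Perm (Fin m),
        (∏ b, c (q b) (ω.1.orderIsoOfFin ω.2 (τ b)))
        = ∏ b, c ((q * τ⁻¹) b) (ω.1.orderIsoOfFin ω.2 b) := by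
      intro q
      rw [← Equiv.prod_comp τ (fun b => c ((q * τ⁻¹) b) (ω.1.orderIsoOfFin ω.2 b))]
      refine Finset.prod_congr rfl fun b _ => ?_
      simp [Equiv.Perm.mul_apply]
    simp only [h1]
    exact Equiv.sum_comp (Equiv.mulRight τ⁻¹)
      (fun q => ∏ b, c (q b) (ω.1.orderIsoOfFin ω.2 b))
  have hg : (∑ τ : Equiv.Perm (Fin m), ((Equiv.Perm.sign τ : ℤ) : ℝ) *
        ∏ b, g b (ω.1.orderIsoOfFin ω.2 (τ b)))
      = Matrix.det (Matrix.of fun a b : Fin m => g a (ω.1.orderIsoOfFin ω.2 b)) := by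
    rw [← Matrix.det_transpose, Matrix.det_apply']
    rfl
  calc ∑ τ : Equiv.Perm (Fin m),
      Matrix.det (Matrix.of fun a b : Fin m => f a (ω.1.orderIsoOfFin ω.2 (τ b))) *
      (∏ b, g b (ω.1.orderIsoOfFin ω.2 (τ b))) *
      (∑ q : Equiv.Perm (Fin m), ∏ b, c (q b) (ω.1.orderIsoOfFin ω.2 (τ b)))
      = ∑ τ : Equiv.Perm (Fin m),
        (Matrix.det (Matrix.of fun a b : Fin m => f a (ω.1.orderIsoOfFin ω.2 b)) *
         (∑ q : Equiv.Perm (Fin m), ∏ b, c (q b) (ω.1.orderIsoOfFin ω.2 b))) *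
        (((Equiv.Perm.sign τ : ℤ) : ℝ) * ∏ b, g b (ω.1.orderIsoOfFin ω.2 (τ b))) := by
        refine Finset.sum_congr rfl fun τ _ => ?_
        rw [hdet τ, hP τ]; ring
    _ = _ := by
        rw [← Finset.mul_sum, hg]; ring

end Stmt18Aux

/-- Let `T = [A,B,C]_R` with frontal slices
`T_k = (∑ r, A i r * B j r * C k r)_{i,j}`, and let `2 ≤ m ≤ min(I,J,K,R)`.  Then
`R_m(T) = [C_m(A) ⊙ C_m(B)] · R_m(C)ᵀ`, where `R_m(T)` is the `C(I,m)C(J,m) × K^m` matrix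
whose column indexed by `(j_1,…,j_m) ∈ {1,…,K}^m` is `vec(D^{m−1}(T_{j_1},…,T_{j_m}))`
(here realized by indexing the rows of `R_m(T)` by the pairs of an `m`-element row subset
and an `m`-element column subset). -/


theorem stmt18 {I J K R m : ℕ} (A : Matrix (Fin I) (Fin R) ℝ) (B : Matrix (Fin J) (Fin R) ℝ)
    (C : Matrix (Fin K) (Fin R) ℝ)
    (hm2 : 2 ≤ m) (hmI : m ≤ I) (hmJ : m ≤ J) (hmK : m ≤ K) (hmR : m ≤ R) :
    (Matrix.of fun (p : {s : Finset (Fin I) // s.card = m} × {t : Finset (Fin J) // t.card = m})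
        (j : Fin m → Fin K) =>
      polarizedCompound
        (fun a => Matrix.of fun i' j' => ∑ r, A i' r * B j' r * C (j a) r) p.1 p.2) =
      khatriRao (compound m A) (compound m B) * (Rmat m C)ᵀ := by
  ext p j
  obtain ⟨s, t⟩ := p
  simp only [Matrix.of_apply, polarizedCompound, compound, Matrix.mul_apply, khatriRao,
    Matrix.transpose_apply, Rmat, permanent]
  rw [coeff_det (fun i a b => ∑ r,
    A (s.1.orderIsoOfFin s.2 a) r * B (t.1.orderIsoOfFin t.2 b) r * C (j i) r)]
  rw [cb (fun a r => A (s.1.orderIsoOfFin s.2 a) r) (fun b r => B (t.1.orderIsoOfFin t.2 b) r)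
    (fun i r => C (j i) r)]
  refine Finset.sum_congr rfl fun ω _ => ?_
  rw [sum_perm_transpose (fun i b => C (j i) (ω.1.orderIsoOfFin ω.2 b))]
end
end
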